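/- Let κ̂ and κ* be Markov kernels on a measurable space X, let μ̂ be a probability measure invariant for κ̂, and let μ* be a probability measure invariant for κ*. Let g : X → ℝ be bounded measurable and let f : X → ℝ be bounded measurable satisfying f(x) = g(x) + (κ̂f)(x) − ∫ g dμ̂ for all x ∈ X. Then ∫ g dμ̂ − ∫ g dμ* = ∫ ( (κ̂f)(x) − (κ*f)(x) ) dμ*(x). -/

import Mathlib

open MeasureTheory ProbabilityTheory

lemma aux_sm_kernel_integral {X : Type*} [MeasurableSpace X]
    (κ : Kernel X X) [IsMarkovKernel κ] (f : X → ℝ) (hf : Measurable f) :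
    StronglyMeasurable (fun x => ∫ y, f y ∂(κ x)) := by
  have : StronglyMeasurable (fun (p : X × X) => f p.2) :=
    (hf.comp measurable_snd).stronglyMeasurable
  exact this.integral_kernel_prod_right'

lemma aux_integrable_of_bounded {X : Type*} [MeasurableSpace X]
    (μ : Measure X) [IsProbabilityMeasure μ] (f : X → ℝ)
    (hf : AEStronglyMeasurable f μ) (C : ℝ) (hC : ∀ x, |f x| ≤ C) :
    Integrable f μ := by
  refine ⟨hf, ?_⟩
  apply HasFiniteIntegral.of_bounded (C := C)
  exact Filter.Eventually.of_forall fun x => by simpa [Real.norm_eq_abs] using hC x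

lemma aux_integral_bind {X : Type*} [MeasurableSpace X]
    (κ : Kernel X X) [IsMarkovKernel κ] (μ : Measure X) [IsProbabilityMeasure μ]
    (f : X → ℝ) (hf : Measurable f) (C : ℝ) (hC : ∀ x, |f x| ≤ C) :
    ∫ x, f x ∂(μ.bind κ) = ∫ x, ∫ y, f y ∂(κ x) ∂μ := by
  have hbind : μ.bind κ = (μ ⊗ₘ κ).map Prod.snd := by
    ext s hs
    rw [Measure.bind_apply hs (Kernel.measurable _).aemeasurable,
      Measure.map_apply measurable_snd hs, Measure.compProd_apply (measurable_snd hs)]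
    rfl
  have hint : Integrable (fun p : X × X => f p.2) (μ ⊗ₘ κ) :=
    aux_integrable_of_bounded _ _ ((hf.comp measurable_snd).aestronglyMeasurable) C
      (fun p => hC p.2)
  rw [hbind, integral_map measurable_snd.aemeasurable hf.aestronglyMeasurable,
    Measure.integral_compProd hint]

theorem integral_diff_eq_integral_model_discrepancy
    {X : Type*} [MeasurableSpace X]
    (κhat κstar : Kernel X X) [IsMarkovKernel κhat] [IsMarkovKernel κstar]
    (μhat : Measure X) [IsProbabilityMeasure μhat]
    (h_inv_hat : Kernel.Invariant κhat μhat)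
    (μstar : Measure X) [IsProbabilityMeasure μstar]
    (h_inv_star : Kernel.Invariant κstar μstar)
    (g f : X → ℝ) (hg_meas : Measurable g) (hf_meas : Measurable f)
    (Cg : ℝ) (hg_bdd : ∀ x, |g x| ≤ Cg)
    (Cf : ℝ) (hf_bdd : ∀ x, |f x| ≤ Cf)
    (h_bellman : ∀ x, f x = g x + (∫ x', f x' ∂(κhat x)) - ∫ z, g z ∂μhat) :
    (∫ x, g x ∂μhat) - ∫ x, g x ∂μstar
      = ∫ x, ((∫ x', f x' ∂(κhat x)) - ∫ x', f x' ∂(κstar x)) ∂μstar := by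
  set A : ℝ := ∫ z, g z ∂μhat with hA
  -- κ̂f x = f x - g x + A
  have hkhat : ∀ x, (∫ x', f x' ∂(κhat x)) = f x - g x + A := fun x => by
    have := h_bellman x; linarith
  -- invariance of μstar gives ∫ κ*f dμ* = ∫ f dμ*
  have hstar : ∫ x, ∫ x', f x' ∂(κstar x) ∂μstar = ∫ x, f x ∂μstar := by
    conv_rhs => rw [← h_inv_star.def]
    exact (aux_integral_bind κstar μstar f hf_meas Cf hf_bdd).symm
  have hf_int : Integrable f μstar :=
    aux_integrable_of_bounded _ _ hf_meas.aestronglyMeasurable Cf hf_bdd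
  have hg_int : Integrable g μstar :=
    aux_integrable_of_bounded _ _ hg_meas.aestronglyMeasurable Cg hg_bdd
  have hkstar_int : Integrable (fun x => ∫ x', f x' ∂(κstar x)) μstar := by
    refine aux_integrable_of_bounded _ _
      (aux_sm_kernel_integral κstar f hf_meas).aestronglyMeasurable Cf (fun x => ?_)
    calc |∫ x', f x' ∂(κstar x)| ≤ ∫ x', |f x'| ∂(κstar x) := by
          simpa [Real.norm_eq_abs] using norm_integral_le_integral_norm (μ := κstar x) f
      _ ≤ ∫ _x', Cf ∂(κstar x) := by
          refine integral_mono ?_ (integrable_const Cf) hf_bdd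
          exact aux_integrable_of_bounded _ _ hf_meas.abs.aestronglyMeasurable Cf
            (fun y => by rw [abs_abs]; exact hf_bdd y)
      _ = Cf := by simp
  have hkhat_int : Integrable (fun x => ∫ x', f x' ∂(κhat x)) μstar := by
    have : (fun x => ∫ x', f x' ∂(κhat x)) = fun x => f x - g x + A := funext hkhat
    rw [this]
    exact (hf_int.sub hg_int).add (integrable_const A)
  rw [integral_sub hkhat_int hkstar_int, hstar]
  have : ∫ x, ∫ x', f x' ∂(κhat x) ∂μstar = ∫ x, (f x - g x + A) ∂μstar := by
    simp_rw [hkhat]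
  rw [this]
  have h2 : ∫ x, (f x - g x + A) ∂μstar
      = (∫ x, f x ∂μstar - ∫ x, g x ∂μstar) + A := by
    have h3 := integral_add (hf_int.sub hg_int) (integrable_const (μ := μstar) A)
    simp only [Pi.sub_apply] at h3
    rw [h3, integral_sub hf_int hg_int]
    simp
  rw [h2]; ring
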